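/- arXiv:2112.11927 — 4 statements merged into one kernel-verified Lean document; each statement's English description precedes it below -/
import Mathlib

section
/- Let D ≥ 0 and ε > 0 be real numbers, and let γ be a real number with 1 < γ ≤ 1/ε. Let L be a finite index set and, for each e ∈ L, let d_e be a real number with D + γ·ε − 1 ≤ d_e ≤ D. Let (X_e)_{e ∈ L} be an independent family of real random variables on a common probability space, where X_e has the uniform distribution on the interval [D, d_e + 1]. Let n ≥ 1 be a natural number and assume (1 − 1/γ)·|L| ≥ 8·ln n. Then the probability that the number of indices e ∈ L with X_e ≥ D + ε is at least (1/2)·(1 − 1/γ)·|L| is at least 1 − 1/n. -/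
open MeasureTheory ProbabilityTheory

/-- The uniform (normalized Lebesgue) probability law on the interval `[a, b]`. -/
noncomputable def uniformLaw (a b : ℝ) : Measure ℝ :=
  (volume (Set.Icc a b))⁻¹ • volume.restrict (Set.Icc a b)

theorem stmt_2 {Ω : Type*} [MeasurableSpace Ω] (μ : Measure Ω) [IsProbabilityMeasure μ]
    {ι : Type*} [DecidableEq ι] (L : Finset ι)
    (D ε γ : ℝ) (hD : 0 ≤ D) (hε : 0 < ε) (hγ1 : 1 < γ) (hγ2 : γ ≤ 1 / ε)
    (d : ι → ℝ) (hd1 : ∀ e ∈ L, D + γ * ε - 1 ≤ d e) (hd2 : ∀ e ∈ L, d e ≤ D)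
    (X : ι → Ω → ℝ) (hX : ∀ e, Measurable (X e))
    (hindep : iIndepFun X μ)
    (hlaw : ∀ e ∈ L, Measure.map (X e) μ = uniformLaw D (d e + 1))
    (n : ℕ) (hn : 1 ≤ n)
    (hL : 8 * Real.log n ≤ (1 - 1 / γ) * L.card) :
    1 - 1 / (n : ℝ) ≤
      (μ {ω | (1 / 2) * (1 - 1 / γ) * L.card ≤
        ((L.filter fun e => D + ε ≤ X e ω).card : ℝ)}).toReal := by
  classical
  have hγ0 : (0:ℝ) < γ := lt_trans one_pos hγ1
  obtain ⟨q, hqdef⟩ : ∃ q : ℝ, q = 1 - 1 / γ := ⟨_, rfl⟩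
  have hq0 : 0 < q := by rw [hqdef]; exact sub_pos.mpr ((div_lt_one hγ0).mpr hγ1)
  have hq1 : q ≤ 1 := by
    have h : 0 < 1 / γ := by positivity
    rw [hqdef]; linarith
  obtain ⟨N, hNdef⟩ : ∃ N : ℝ, N = (L.card : ℝ) := ⟨_, rfl⟩
  have hN0 : 0 ≤ N := by rw [hNdef]; exact Nat.cast_nonneg _
  rw [← hqdef, ← hNdef] at hL
  -- the indicator functions
  obtain ⟨g, hgdef⟩ : ∃ g : ℝ → ℝ, g = (Set.Ici (D + ε)).indicator 1 := ⟨_, rfl⟩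
  have hgmeas : Measurable g := by rw [hgdef]; exact measurable_one.indicator measurableSet_Ici
  obtain ⟨Y, hYdef⟩ : ∃ Y : ι → Ω → ℝ, Y = fun e => g ∘ X e := ⟨_, rfl⟩
  have hYmeas : ∀ e, Measurable (Y e) := by
    intro e; rw [hYdef]; exact hgmeas.comp (hX e)
  have hYindep : iIndepFun Y μ := by
    rw [hYdef]; exact hindep.comp (fun _ => g) (fun _ => hgmeas)
  have hYval : ∀ e ω, Y e ω = if D + ε ≤ X e ω then 1 else 0 := by
    intro e ω
    rw [hYdef, hgdef]
    simp only [Function.comp_apply, Set.indicator_apply, Set.mem_Ici, Pi.one_apply]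
  have hY01 : ∀ e ω, Y e ω = 0 ∨ Y e ω = 1 := by
    intro e ω; rw [hYval]; split <;> simp
  have hYnonneg : ∀ e ω, 0 ≤ Y e ω := by
    intro e ω; rcases hY01 e ω with h | h <;> rw [h] <;> norm_num
  have hYle1 : ∀ e ω, Y e ω ≤ 1 := by
    intro e ω; rcases hY01 e ω with h | h <;> rw [h] <;> norm_num
  -- probabilities
  obtain ⟨p, hpdef⟩ : ∃ p : ι → ℝ, p = fun e => (μ {ω | D + ε ≤ X e ω}).toReal := ⟨_, rfl⟩
  have hAmeas : ∀ e, MeasurableSet {ω | D + ε ≤ X e ω} := fun e => (hX e) measurableSet_Ici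
  have hp_val : ∀ e ∈ L, p e = (d e + 1 - D - ε) / (d e + 1 - D) := by
    intro e he
    have hℓ : ε < d e + 1 - D := by
      have h1 := hd1 e he
      have : ε < γ * ε := by nlinarith
      linarith
    have hmap : μ {ω | D + ε ≤ X e ω} = uniformLaw D (d e + 1) (Set.Ici (D + ε)) := by
      have hset : {ω | D + ε ≤ X e ω} = X e ⁻¹' Set.Ici (D + ε) := rfl
      rw [hset, ← Measure.map_apply (hX e) measurableSet_Ici, hlaw e he]
    have hinter : Set.Ici (D + ε) ∩ Set.Icc D (d e + 1) = Set.Icc (D + ε) (d e + 1) := by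
      ext x
      simp only [Set.mem_inter_iff, Set.mem_Ici, Set.mem_Icc]
      constructor
      · rintro ⟨h1, _, h3⟩; exact ⟨h1, h3⟩
      · rintro ⟨h1, h2⟩; exact ⟨h1, by linarith, h2⟩
    have hvol : uniformLaw D (d e + 1) (Set.Ici (D + ε))
        = (ENNReal.ofReal (d e + 1 - D))⁻¹ * ENNReal.ofReal (d e + 1 - D - ε) := by
      rw [uniformLaw, Measure.smul_apply, Measure.restrict_apply measurableSet_Ici, hinter,
        Real.volume_Icc, Real.volume_Icc, smul_eq_mul]
      ring_nf
    rw [hpdef]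
    show (μ {ω | D + ε ≤ X e ω}).toReal = _
    rw [hmap, hvol, ENNReal.toReal_mul, ENNReal.toReal_inv,
      ENNReal.toReal_ofReal (by linarith), ENNReal.toReal_ofReal (by linarith)]
    rw [div_eq_inv_mul]
  have hp_ge : ∀ e ∈ L, q ≤ p e := by
    intro e he
    rw [hp_val e he]
    have h1 := hd1 e he
    have hγε : γ * ε ≤ d e + 1 - D := by linarith
    have hℓ0 : 0 < d e + 1 - D := lt_of_lt_of_le (by positivity) hγε
    rw [hqdef, le_div_iff₀ hℓ0]
    have hinv : ε ≤ (d e + 1 - D) / γ := by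
      rw [le_div_iff₀ hγ0]; nlinarith
    have heq : (1 - 1 / γ) * (d e + 1 - D) = (d e + 1 - D) - (d e + 1 - D) / γ := by
      field_simp
    rw [heq]
    have h2 : ε ≤ (d e + 1 - D) / γ := hinv
    linarith
  have hp_le1 : ∀ e, p e ≤ 1 := by
    intro e
    rw [hpdef]
    show (μ {ω | D + ε ≤ X e ω}).toReal ≤ 1
    have := prob_le_one (μ := μ) (s := {ω | D + ε ≤ X e ω})
    exact ENNReal.toReal_le_of_le_ofReal one_pos.le (by simpa using this)
  -- integral of Y e
  have hYint : ∀ e, Integrable (Y e) μ := by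
    intro e
    refine Integrable.mono' (integrable_const 1) (hYmeas e).aestronglyMeasurable ?_
    filter_upwards with ω
    rw [Real.norm_eq_abs, abs_of_nonneg (hYnonneg e ω)]
    exact hYle1 e ω
  have hYintegral : ∀ e, ∫ ω, Y e ω ∂μ = p e := by
    intro e
    have h : Y e = Set.indicator {ω | D + ε ≤ X e ω} 1 := by
      funext ω
      rw [hYval, Set.indicator_apply]
      simp [Set.mem_setOf_eq]
    rw [h, integral_indicator_one (hAmeas e), hpdef]; rfl
  -- mgf of Y e
  have hmgf : ∀ t : ℝ, ∀ e, mgf (Y e) μ t = 1 + (Real.exp t - 1) * p e := by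
    intro t e
    have hfun : (fun ω => Real.exp (t * Y e ω)) = fun ω => 1 + (Real.exp t - 1) * Y e ω := by
      funext ω
      rcases hY01 e ω with h | h <;> rw [h] <;> simp
    rw [mgf, hfun]
    rw [integral_add (integrable_const 1) ((hYint e).const_mul _), integral_const,
      integral_const_mul, hYintegral e]
    simp
  -- mgf at t = -log 2
  obtain ⟨t, htdef⟩ : ∃ t : ℝ, t = -(Real.log 2) := ⟨_, rfl⟩
  have hexp_t : Real.exp t = 1 / 2 := by
    rw [htdef, Real.exp_neg, Real.exp_log two_pos, one_div]
  have ht0 : t ≤ 0 := by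
    rw [htdef]; simp [Real.log_nonneg one_le_two]
  have hmgf_bound : ∀ e ∈ L, mgf (Y e) μ t ≤ Real.exp (-q / 2) := by
    intro e he
    rw [hmgf t e, hexp_t]
    have h1 : 1 + (1 / 2 - 1) * p e = 1 - p e / 2 := by ring
    rw [h1]
    have h2 : 1 - p e / 2 ≤ 1 - q / 2 := by linarith [hp_ge e he]
    have h3 : 1 - q / 2 ≤ Real.exp (-q / 2) := by
      have := Real.add_one_le_exp (-q / 2)
      linarith
    linarith
  -- sum S
  obtain ⟨S, hSdef⟩ : ∃ S : Ω → ℝ, S = fun ω => ∑ e ∈ L, Y e ω := ⟨_, rfl⟩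
  have hSfun : S = ∑ e ∈ L, Y e := by
    funext ω; rw [hSdef]; simp
  have hSmeas : Measurable S := by
    rw [hSdef]; exact Finset.measurable_sum L (fun e _ => hYmeas e)
  have hSnonneg : ∀ ω, 0 ≤ S ω := by
    intro ω; rw [hSdef]; exact Finset.sum_nonneg fun e _ => hYnonneg e ω
  have hScard : ∀ ω, ((L.filter fun e => D + ε ≤ X e ω).card : ℝ) = S ω := by
    intro ω
    rw [hSdef, Finset.card_filter]
    push_cast
    refine Finset.sum_congr rfl fun e _ => ?_
    rw [hYval]
  -- integrability of exp (t * S)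
  have hSint : Integrable (fun ω => Real.exp (t * S ω)) μ := by
    refine Integrable.mono' (integrable_const 1) ?_ ?_
    · exact ((hSmeas.const_mul t).exp).aestronglyMeasurable
    · filter_upwards with ω
      rw [Real.norm_eq_abs, abs_of_nonneg (Real.exp_pos _).le]
      have h : t * S ω ≤ 0 := mul_nonpos_of_nonpos_of_nonneg ht0 (hSnonneg ω)
      calc Real.exp (t * S ω) ≤ Real.exp 0 := Real.exp_le_exp.mpr h
        _ = 1 := Real.exp_zero
  -- Chernoff bound
  have hcher := measure_le_le_exp_mul_mgf (X := S) (μ := μ) (t := t) (q * N / 2) ht0 hSint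
  have hmgfS : mgf S μ t = ∏ e ∈ L, mgf (Y e) μ t := by
    rw [hSfun]
    exact hYindep.mgf_sum hYmeas L
  have hprod : ∏ e ∈ L, mgf (Y e) μ t ≤ Real.exp (-q / 2) ^ L.card :=
    calc ∏ e ∈ L, mgf (Y e) μ t ≤ ∏ e ∈ L, Real.exp (-q / 2) :=
          Finset.prod_le_prod (fun e _ => mgf_nonneg) (fun e he => hmgf_bound e he)
      _ = Real.exp (-q / 2) ^ L.card := by rw [Finset.prod_const]
  have hprod' : ∏ e ∈ L, mgf (Y e) μ t ≤ Real.exp (-q * N / 2) := by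
    refine hprod.trans ?_
    rw [← Real.exp_nat_mul]
    apply le_of_eq
    congr 1
    rw [hNdef]; ring
  have hfinal : (μ {ω | S ω ≤ q * N / 2}).toReal ≤ 1 / n := by
    have hn0 : (0:ℝ) < n := by exact_mod_cast hn
    calc (μ {ω | S ω ≤ q * N / 2}).toReal
        ≤ Real.exp (-t * (q * N / 2)) * mgf S μ t := hcher
      _ ≤ Real.exp (-t * (q * N / 2)) * Real.exp (-q * N / 2) := by
          refine mul_le_mul_of_nonneg_left ?_ (Real.exp_pos _).le
          rw [hmgfS]; exact hprod'
      _ = Real.exp (Real.log 2 * (q * N / 2) + -q * N / 2) := by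
          rw [← Real.exp_add, htdef]; ring_nf
      _ ≤ Real.exp (-(Real.log n)) := by
          apply Real.exp_le_exp.mpr
          have hlog2 : Real.log 2 ≤ 3 / 4 := by
            have := Real.log_two_lt_d9
            linarith
          have hqN0 : 0 ≤ q * N := mul_nonneg hq0.le hN0
          nlinarith [mul_nonneg (sub_nonneg.mpr hlog2) hqN0]
      _ = 1 / n := by
          rw [Real.exp_neg, Real.exp_log hn0, one_div]
  -- conclude
  have hseteq : {ω | (1 / 2) * (1 - 1 / γ) * L.card ≤
      ((L.filter fun e => D + ε ≤ X e ω).card : ℝ)} = {ω | q * N / 2 ≤ S ω} := by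
    ext ω
    simp only [Set.mem_setOf_eq, hScard ω, hqdef, ← hNdef]
    constructor <;> intro h <;> linarith
  rw [hseteq]
  have hTmeas : MeasurableSet {ω | q * N / 2 ≤ S ω} := hSmeas measurableSet_Ici
  have h1 : (μ {ω | q * N / 2 ≤ S ω}).toReal + (μ {ω | q * N / 2 ≤ S ω}ᶜ).toReal = 1 := by
    rw [← ENNReal.toReal_add (measure_ne_top μ _) (measure_ne_top μ _),
      measure_add_measure_compl hTmeas, measure_univ, ENNReal.toReal_one]
  have h2 : (μ {ω | q * N / 2 ≤ S ω}ᶜ).toReal ≤ 1 / n := by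
    have hc : {ω | q * N / 2 ≤ S ω}ᶜ ⊆ {ω | S ω ≤ q * N / 2} := by
      intro ω hω
      simp only [Set.mem_compl_iff, Set.mem_setOf_eq, not_le] at hω
      exact le_of_lt hω
    calc (μ {ω | q * N / 2 ≤ S ω}ᶜ).toReal
        ≤ (μ {ω | S ω ≤ q * N / 2}).toReal :=
          ENNReal.toReal_mono (measure_ne_top μ _) (measure_mono hc)
      _ ≤ 1 / n := hfinal
  linarith
end

section
/- Let k ≥ 1 be an integer, let a be a real number, let b_1 ≤ b_2 ≤ ... ≤ b_{k+1} be real numbers with a < b_1, and let P be a real number with a < P < b_1. Let X_1, ..., X_{k+1} be independent real random variables on a common probability space, where X_j has the uniform distribution on [a, b_j]. Then the probability of the event { X_{k+1} ≤ X_j for all j = 1, ..., k+1 } ∩ { X_{k+1} ≤ P } is at most (1/(k+1)) · ( 1 − ( 1 − (P − a)/(b_k − a) )^{k+1} ). -/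
open MeasureTheory ProbabilityTheory
open scoped ENNReal

lemma uniformLaw_Ici_le {a c B x : ℝ} (hac : a < c) (hcB : c ≤ B) :
    uniformLaw a c (Set.Ici x) ≤ ENNReal.ofReal ((B - x) / (B - a)) := by
  have haB : a < B := lt_of_lt_of_le hac hcB
  have hset : Set.Ici x ∩ Set.Icc a c = Set.Icc (max a x) c := by
    ext y; simp [Set.mem_Icc, max_le_iff]; tauto
  have h1 : uniformLaw a c (Set.Ici x)
      = (ENNReal.ofReal (c - a))⁻¹ * ENNReal.ofReal (c - max a x) := by
    rw [uniformLaw, Measure.smul_apply, Measure.restrict_apply' measurableSet_Icc, hset,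
      Real.volume_Icc, Real.volume_Icc]
    rfl
  rw [h1]
  rcases le_or_gt x a with hxa | hax
  · rw [max_eq_left hxa, ENNReal.inv_mul_cancel (by simp [hac]) (by simp)]
    rw [show (1 : ℝ≥0∞) = ENNReal.ofReal 1 from by simp]
    apply ENNReal.ofReal_le_ofReal
    rw [le_div_iff₀ (by linarith)]
    linarith
  · rw [max_eq_right hax.le, mul_comm, ← div_eq_mul_inv,
      ← ENNReal.ofReal_div_of_pos (by linarith)]
    apply ENNReal.ofReal_le_ofReal
    rw [div_le_div_iff₀ (by linarith) (by linarith)]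
    nlinarith

lemma integral_pow_ratio {a P B : ℝ} (haB : a < B) (k : ℕ) :
    ∫ x in a..P, ((B - x) / (B - a)) ^ k
      = ((B - a) / (k + 1)) * (1 - ((B - P) / (B - a)) ^ (k + 1)) := by
  have hBa : B - a ≠ 0 := by intro h; nlinarith
  have hk1 : (k : ℝ) + 1 ≠ 0 := by positivity
  set F : ℝ → ℝ := fun x => -(((B - x) / (B - a)) ^ (k + 1)) * ((B - a) / (k + 1)) with hFdef
  have hF : ∀ x : ℝ, HasDerivAt F (((B - x) / (B - a)) ^ k) x := by
    intro x
    have hu : HasDerivAt (fun x : ℝ => (B - x) / (B - a)) ((-1) / (B - a)) x :=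
      ((hasDerivAt_id x).const_sub B).div_const _
    have := ((hu.pow (k + 1)).neg).mul_const ((B - a) / (k + 1))
    refine this.congr_deriv ?_
    push_cast
    field_simp
  have hcont : Continuous fun x : ℝ => ((B - x) / (B - a)) ^ k :=
    ((continuous_const.sub continuous_id).div_const _).pow k
  rw [intervalIntegral.integral_eq_sub_of_hasDerivAt (fun x _ => hF x)
    (hcont.intervalIntegrable _ _)]
  simp only [hFdef]
  rw [div_self hBa]
  ring

lemma map_pi_eq_of_iIndepFun {Ω : Type*} [MeasurableSpace Ω] (μ : Measure Ω)
    [IsProbabilityMeasure μ] {n : ℕ} (X : Fin n → Ω → ℝ) (hX : ∀ j, Measurable (X j))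
    (hindep : iIndepFun X μ) (ν : Fin n → Measure ℝ)
    [∀ j, IsProbabilityMeasure (ν j)] (hlaw : ∀ j, Measure.map (X j) μ = ν j) :
    Measure.map (fun ω j => X j ω) μ = Measure.pi ν := by
  refine (Measure.pi_eq fun s hs => ?_).symm
  rw [Measure.map_apply (measurable_pi_iff.2 hX) (MeasurableSet.univ_pi fun j => hs j)]
  have hpre : (fun ω j => X j ω) ⁻¹' Set.pi Set.univ s = ⋂ j ∈ Finset.univ, X j ⁻¹' s j := by
    ext ω; simp [Set.mem_pi]
  rw [hpre, (iIndepFun_iff_measure_inter_preimage_eq_mul.1 hindep) Finset.univ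
    (fun j _ => hs j)]
  refine Finset.prod_congr rfl fun j _ => ?_
  rw [← hlaw j, Measure.map_apply (hX j) (hs j)]

theorem stmt_3 {Ω : Type*} [MeasurableSpace Ω] (μ : Measure Ω) [IsProbabilityMeasure μ]
    (k : ℕ) (hk : 1 ≤ k) (a : ℝ) (b : Fin (k + 1) → ℝ)
    (hb_mono : Monotone b) (hab : a < b 0)
    (P : ℝ) (haP : a < P) (hPb : P < b 0)
    (X : Fin (k + 1) → Ω → ℝ) (hX : ∀ j, Measurable (X j))
    (hindep : iIndepFun X μ)
    (hlaw : ∀ j, Measure.map (X j) μ = uniformLaw a (b j)) :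
    (μ ({ω | ∀ j, X (Fin.last k) ω ≤ X j ω} ∩ {ω | X (Fin.last k) ω ≤ P})).toReal ≤
      (1 / (k + 1)) *
        (1 - (1 - (P - a) / (b ⟨k - 1, by omega⟩ - a)) ^ (k + 1)) := by
  set B : ℝ := b ⟨k - 1, by omega⟩ with hBdef
  set ν : Fin (k + 1) → Measure ℝ := fun j => uniformLaw a (b j) with hνdef
  haveI hprob : ∀ j, IsProbabilityMeasure (ν j) := fun j => by
    rw [show ν j = Measure.map (X j) μ from (hlaw j).symm]
    exact Measure.isProbabilityMeasure_map (hX j).aemeasurable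
  -- basic real inequalities
  have hb0B : b 0 ≤ B := hb_mono (Fin.zero_le _)
  have haB : a < B := lt_of_lt_of_le hab hb0B
  have hPB : P < B := lt_of_lt_of_le hPb hb0B
  have hBlast : B ≤ b (Fin.last k) := hb_mono (Fin.le_last _)
  have halast : a < b (Fin.last k) := lt_of_lt_of_le haB hBlast
  have hPlast : P ≤ b (Fin.last k) := le_trans hPB.le hBlast
  have hcj : ∀ j : Fin k, a < b ((Fin.last k).succAbove j) :=
    fun j => lt_of_lt_of_le hab (hb_mono (Fin.zero_le _))
  have hcjB : ∀ j : Fin k, b ((Fin.last k).succAbove j) ≤ B := by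
    intro j
    apply hb_mono
    rw [Fin.succAbove_last]
    simp only [Fin.le_def, Fin.coe_castSucc]
    omega
  -- the joint event as a set in the product space
  set S : Set (Fin (k + 1) → ℝ) :=
    {x | (∀ j, x (Fin.last k) ≤ x j) ∧ x (Fin.last k) ≤ P} with hSdef
  have hSmeas : MeasurableSet S := by
    have : S = (⋂ j, {x : Fin (k + 1) → ℝ | x (Fin.last k) ≤ x j}) ∩
        {x : Fin (k + 1) → ℝ | x (Fin.last k) ≤ P} := by
      ext x; simp [hSdef]
    rw [this]
    refine MeasurableSet.inter (MeasurableSet.iInter fun j => ?_) ?_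
    · exact measurableSet_le (measurable_pi_apply (Fin.last k)) (measurable_pi_apply j)
    · exact measurableSet_le (measurable_pi_apply (Fin.last k)) measurable_const
  have hjoint : Measure.map (fun ω j => X j ω) μ = Measure.pi ν :=
    map_pi_eq_of_iIndepFun μ X hX hindep ν hlaw
  have hμE : μ ({ω | ∀ j, X (Fin.last k) ω ≤ X j ω} ∩ {ω | X (Fin.last k) ω ≤ P})
      = Measure.pi ν S := by
    rw [← hjoint, Measure.map_apply (measurable_pi_iff.2 hX) hSmeas]
    rfl
  set T : Set (ℝ × (Fin k → ℝ)) := {p | p.1 ≤ P ∧ ∀ j, p.1 ≤ p.2 j} with hTdef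
  have hTmeas : MeasurableSet T := by
    have : T = {p : ℝ × (Fin k → ℝ) | p.1 ≤ P} ∩
        ⋂ j, {p : ℝ × (Fin k → ℝ) | p.1 ≤ p.2 j} := by
      ext p; simp [hTdef]
    rw [this]
    exact (measurableSet_le measurable_fst measurable_const).inter
      (MeasurableSet.iInter fun j => measurableSet_le measurable_fst
        ((measurable_pi_apply j).comp measurable_snd))
  set e := MeasurableEquiv.piFinSuccAbove (fun _ : Fin (k + 1) => ℝ) (Fin.last k) with hedef
  have hST : S = e ⁻¹' T := by
    ext x
    simp only [hSdef, Set.mem_setOf_eq, Set.mem_preimage, hedef,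
      MeasurableEquiv.piFinSuccAbove_apply, hTdef, Fin.removeNth]
    constructor
    · rintro ⟨h1, h2⟩
      exact ⟨h2, fun j => h1 _⟩
    · rintro ⟨h2, h1⟩
      refine ⟨?_, h2⟩
      rw [Fin.forall_iff_succAbove (Fin.last k)]
      exact ⟨le_refl _, h1⟩
  set πk : Measure (Fin k → ℝ) := Measure.pi fun j => ν ((Fin.last k).succAbove j) with hπkdef
  -- pointwise bound for the slices
  set f : ℝ → ℝ := fun x => ((B - x) / (B - a)) ^ k with hfdef
  set h : ℝ → ℝ≥0∞ := fun x => (Set.Iic P).indicator (fun x => ENNReal.ofReal (f x)) x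
    with hhdef
  have hbound : ∀ x : ℝ, πk (Prod.mk x ⁻¹' T) ≤ h x := by
    intro x
    by_cases hx : x ≤ P
    · have hpre : Prod.mk x ⁻¹' T = Set.pi Set.univ (fun _ : Fin k => Set.Ici x) := by
        ext y; simp [hTdef, hx, Set.mem_pi, Pi.le_def]
      rw [hpre, hπkdef, Measure.pi_pi]
      simp only [hhdef]
      rw [Set.indicator_of_mem (Set.mem_Iic.2 hx)]
      have hnn : (0 : ℝ) ≤ (B - x) / (B - a) :=
        div_nonneg (by linarith) (by linarith)
      calc ∏ j : Fin k, ν ((Fin.last k).succAbove j) (Set.Ici x)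
          ≤ ∏ _j : Fin k, ENNReal.ofReal ((B - x) / (B - a)) :=
            Finset.prod_le_prod' fun j _ => uniformLaw_Ici_le (hcj j) (hcjB j)
        _ = ENNReal.ofReal ((B - x) / (B - a)) ^ k := by
            rw [Finset.prod_const, Finset.card_univ, Fintype.card_fin]
        _ = ENNReal.ofReal (f x) := by
            simp only [hfdef]
            rw [← ENNReal.ofReal_pow hnn]
    · have hpre : Prod.mk x ⁻¹' T = ∅ := by
        ext y; simp [hTdef, hx]
      rw [hpre]
      simp
  -- the key chain of (in)equalities in ℝ≥0∞
  have hIcc : Set.Iic P ∩ Set.Icc a (b (Fin.last k)) = Set.Icc a P := by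
    ext y
    simp only [Set.mem_inter_iff, Set.mem_Iic, Set.mem_Icc]
    constructor
    · rintro ⟨h1, h2, _⟩; exact ⟨h2, h1⟩
    · rintro ⟨h1, h2⟩; exact ⟨h2, h1, le_trans h2 hPlast⟩
  have hint : IntegrableOn f (Set.Icc a P) volume :=
    (((continuous_const.sub continuous_id).div_const _).pow k).integrableOn_Icc
  have hfnn : 0 ≤ᵐ[volume.restrict (Set.Icc a P)] f := by
    filter_upwards [ae_restrict_mem measurableSet_Icc] with x hx
    exact pow_nonneg (div_nonneg (by linarith [hx.2]) (by linarith)) k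
  have hIval : ∫ x in Set.Icc a P, f x
      = ((B - a) / (k + 1)) * (1 - ((B - P) / (B - a)) ^ (k + 1)) := by
    rw [MeasureTheory.integral_Icc_eq_integral_Ioc,
      ← intervalIntegral.integral_of_le haP.le]
    exact integral_pow_ratio haB k
  have hIval_nn : 0 ≤ ∫ x in Set.Icc a P, f x := integral_nonneg_of_ae hfnn
  have hchain : Measure.pi ν S ≤
      ENNReal.ofReal ((1 / ((k : ℝ) + 1)) * (1 - ((B - P) / (B - a)) ^ (k + 1))) := by
    calc Measure.pi ν S
        = ((ν (Fin.last k)).prod πk) T := by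
          rw [hST, ← Measure.map_apply e.measurable hTmeas,
            (measurePreserving_piFinSuccAbove ν (Fin.last k)).map_eq]
      _ = ∫⁻ x, πk (Prod.mk x ⁻¹' T) ∂(ν (Fin.last k)) := Measure.prod_apply hTmeas
      _ ≤ ∫⁻ x, h x ∂(ν (Fin.last k)) := lintegral_mono hbound
      _ = (ENNReal.ofReal (b (Fin.last k) - a))⁻¹ *
            ∫⁻ x in Set.Icc a P, ENNReal.ofReal (f x) ∂volume := by
          simp only [hνdef, hhdef, uniformLaw]
          rw [lintegral_smul_measure,
            lintegral_indicator measurableSet_Iic,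
            Measure.restrict_restrict measurableSet_Iic, hIcc, Real.volume_Icc, smul_eq_mul]
      _ ≤ (ENNReal.ofReal (B - a))⁻¹ *
            ∫⁻ x in Set.Icc a P, ENNReal.ofReal (f x) ∂volume := by
          apply mul_le_mul_left
          exact ENNReal.inv_le_inv' (ENNReal.ofReal_le_ofReal (by linarith))
      _ = (ENNReal.ofReal (B - a))⁻¹ * ENNReal.ofReal (∫ x in Set.Icc a P, f x) := by
          rw [MeasureTheory.ofReal_integral_eq_lintegral_ofReal hint hfnn]
      _ = ENNReal.ofReal ((∫ x in Set.Icc a P, f x) / (B - a)) := by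
          rw [ENNReal.ofReal_div_of_pos (by linarith), div_eq_mul_inv, mul_comm]
      _ = ENNReal.ofReal ((1 / ((k : ℝ) + 1)) * (1 - ((B - P) / (B - a)) ^ (k + 1))) := by
          rw [hIval]
          congr 1
          have hQ : ∀ Q : ℝ, (B - a) / ((k : ℝ) + 1) * Q / (B - a)
              = 1 / ((k : ℝ) + 1) * Q := by
            intro Q
            have h1 : B - a ≠ 0 := ne_of_gt (by linarith)
            have h2 : (k : ℝ) + 1 ≠ 0 := by positivity
            field_simp
          exact hQ _
  have hratio : (1 : ℝ) - (P - a) / (B - a) = (B - P) / (B - a) := by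
    have h1 : B - a ≠ 0 := ne_of_gt (by linarith)
    field_simp
    ring
  have hpow_le : ((B - P) / (B - a)) ^ (k + 1) ≤ 1 :=
    pow_le_one₀ (div_nonneg (by linarith) (by linarith))
      ((div_le_one (by linarith)).2 (by linarith))
  have hrhs_nn : 0 ≤ (1 / ((k : ℝ) + 1)) * (1 - ((B - P) / (B - a)) ^ (k + 1)) :=
    mul_nonneg (by positivity) (by linarith)
  rw [hμE, hratio]
  exact ENNReal.toReal_le_of_le_ofReal hrhs_nn hchain
end

section
/- For every real number q with 0 < q ≤ 1, every real number γ with γ ≥ 1, and every integer l ≥ 1, one has ∑_{i=1}^{l} ∑_{k=0}^{i−1} binom(i−1, k) · q^k · (1 − q)^{i−1−k} · (1/(k+1)) · ( 1 − (1 − 1/γ)^{k+1} ) = ∑_{i=1}^{l} (1/(i·q)) · ( 1 − (1 − q/γ)^{i} ). -/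
open Finset

lemma aux_pow (x y : ℝ) (n : ℕ) :
    ∑ k ∈ range (n+1), ((n+1).choose (k+1) : ℝ) * (x^(k+1) * y^(n-k))
      = (x+y)^(n+1) - y^(n+1) := by
  have h := add_pow x y (n+1)
  rw [Finset.sum_range_succ'] at h
  simp only [Nat.succ_sub_succ, pow_zero, one_mul, Nat.choose_zero_right, Nat.cast_one,
    mul_one, Nat.sub_zero] at h
  rw [h, add_sub_cancel_right]
  exact Finset.sum_congr rfl fun k _ => by ring

lemma term_eq (q γ : ℝ) (hq0 : 0 < q) (hγ : 1 ≤ γ) (n : ℕ) :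
    ∑ k ∈ range (n+1), (n.choose k : ℝ) * q^k * (1-q)^(n-k) * (1/(k+1)) *
        (1 - (1 - 1/γ)^(k+1))
      = (1/((n+1)*q)) * (1 - (1 - q/γ)^(n+1)) := by
  have hγ0 : γ ≠ 0 := by positivity
  have hq : q ≠ 0 := ne_of_gt hq0
  have key : ∑ k ∈ range (n+1), ((n+1).choose (k+1) : ℝ) *
      (q^(k+1) * (1-q)^(n-k) - (q*(1-1/γ))^(k+1) * (1-q)^(n-k))
      = 1 - (1 - q/γ)^(n+1) := by
    rw [Finset.sum_congr rfl (fun k (_ : k ∈ range (n+1)) =>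
      (mul_sub (((n+1).choose (k+1) : ℝ)) _ _)), Finset.sum_sub_distrib]
    have h1 := aux_pow q (1-q) n
    have h2 := aux_pow (q*(1-1/γ)) (1-q) n
    have e1 : q + (1-q) = 1 := by ring
    have e2 : q*(1-1/γ) + (1-q) = 1 - q/γ := by field_simp; ring
    rw [e1] at h1; rw [e2] at h2
    rw [h1, h2]; ring
  have hEq : ∀ k ∈ range (n+1),
      (n.choose k : ℝ) * q^k * (1-q)^(n-k) * (1/(k+1)) * (1 - (1 - 1/γ)^(k+1))
      = (1/((n+1)*q)) * (((n+1).choose (k+1) : ℝ) *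
          (q^(k+1) * (1-q)^(n-k) - (q*(1-1/γ))^(k+1) * (1-q)^(n-k))) := by
    intro k _
    have hk1 : ((k:ℝ)+1) ≠ 0 := by positivity
    have hn1 : ((n:ℝ)+1) ≠ 0 := by positivity
    have hchoose : ((n+1).choose (k+1) : ℝ) = ((n:ℝ)+1) * (n.choose k) / ((k:ℝ)+1) := by
      rw [eq_div_iff hk1]
      exact_mod_cast (Nat.add_one_mul_choose_eq n k).symm
    rw [hchoose, mul_pow]
    field_simp
    ring
  rw [Finset.sum_congr rfl hEq, ← Finset.mul_sum, key]

theorem stmt_8 (q : ℝ) (hq0 : 0 < q) (hq1 : q ≤ 1) (γ : ℝ) (hγ : 1 ≤ γ)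
    (l : ℕ) (hl : 1 ≤ l) :
    ∑ i ∈ Finset.Icc 1 l, ∑ k ∈ Finset.range i,
        ((i - 1).choose k : ℝ) * q ^ k * (1 - q) ^ (i - 1 - k) * (1 / (k + 1)) *
          (1 - (1 - 1 / γ) ^ (k + 1)) =
      ∑ i ∈ Finset.Icc 1 l, (1 / (i * q)) * (1 - (1 - q / γ) ^ i) := by
  refine Finset.sum_congr rfl fun i hi => ?_
  obtain ⟨n, rfl⟩ : ∃ n, i = n + 1 := by
    rcases Nat.exists_eq_add_of_le (Finset.mem_Icc.mp hi).1 with ⟨n, hn⟩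
    exact ⟨n, by omega⟩
  simpa [Nat.add_sub_cancel] using term_eq q γ hq0 hγ n
end

section
/- For every real number q with 0 < q ≤ 1, every real number γ with γ ≥ 1, and all integers i0, l with 1 ≤ i0 ≤ l, one has ∑_{i=1}^{l} (1/(i·q)) · ( 1 − (1 − q/γ)^{i} ) ≤ i0/γ + (1/q) · ∑_{i=i0}^{l} 1/i. -/
theorem stmt_9 (q : ℝ) (hq0 : 0 < q) (hq1 : q ≤ 1) (γ : ℝ) (hγ : 1 ≤ γ)
    (i0 l : ℕ) (hi0 : 1 ≤ i0) (hil : i0 ≤ l) :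
    ∑ i ∈ Finset.Icc 1 l, (1 / (i * q)) * (1 - (1 - q / γ) ^ i) ≤
      i0 / γ + (1 / q) * ∑ i ∈ Finset.Icc i0 l, (1 / (i : ℝ)) := by
  have hγ0 : (0:ℝ) < γ := lt_of_lt_of_le one_pos hγ
  have hx0 : 0 ≤ q / γ := by positivity
  have hx1 : q / γ ≤ 1 := by
    rw [div_le_one hγ0]; linarith
  have hterm1 : ∀ i : ℕ, 1 ≤ i →
      (1 / (i * q)) * (1 - (1 - q / γ) ^ i) ≤ 1 / γ := by
    intro i hi
    have hipos : (0:ℝ) < i := by exact_mod_cast hi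
    have hkey : 1 - (i : ℝ) * (q / γ) ≤ (1 - q / γ) ^ i := by
      have := one_add_mul_le_pow (a := -(q / γ)) (by linarith) i
      calc 1 - (i : ℝ) * (q / γ) = 1 + i * (-(q/γ)) := by ring
        _ ≤ (1 + -(q/γ)) ^ i := this
        _ = (1 - q/γ) ^ i := by ring_nf
    have h1 : 1 - (1 - q / γ) ^ i ≤ i * (q / γ) := by linarith
    calc (1 / (i * q)) * (1 - (1 - q / γ) ^ i)
        ≤ (1 / (i * q)) * (i * (q / γ)) := by
          apply mul_le_mul_of_nonneg_left h1 (by positivity)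
      _ = 1 / γ := by field_simp
  have hterm2 : ∀ i : ℕ, 1 ≤ i →
      (1 / (i * q)) * (1 - (1 - q / γ) ^ i) ≤ (1 / q) * (1 / i) := by
    intro i hi
    have hipos : (0:ℝ) < i := by exact_mod_cast hi
    have h1 : 1 - (1 - q / γ) ^ i ≤ 1 := by
      have := pow_nonneg (by linarith : (0:ℝ) ≤ 1 - q/γ) i
      linarith
    calc (1 / (i * q)) * (1 - (1 - q / γ) ^ i)
        ≤ (1 / (i * q)) * 1 := by
          apply mul_le_mul_of_nonneg_left h1 (by positivity)
      _ = (1 / q) * (1 / i) := by field_simp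
  rw [← Finset.Ico_add_one_right_eq_Icc 1 l,
    ← Finset.sum_Ico_consecutive _ (by omega : 1 ≤ i0) (by omega : i0 ≤ l + 1),
    Finset.Ico_add_one_right_eq_Icc i0 l]
  have h1 : ∑ i ∈ Finset.Ico 1 i0, (1 / (i * q)) * (1 - (1 - q / γ) ^ i)
      ≤ (i0 : ℝ) / γ := by
    calc ∑ i ∈ Finset.Ico 1 i0, (1 / (i * q)) * (1 - (1 - q / γ) ^ i)
        ≤ ∑ i ∈ Finset.Ico 1 i0, 1 / γ := by
          apply Finset.sum_le_sum
          intro i hi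
          exact hterm1 i (Finset.mem_Ico.mp hi).1
      _ = ((i0 - 1 : ℕ) : ℝ) * (1 / γ) := by
          rw [Finset.sum_const, Nat.card_Ico]; simp
      _ ≤ (i0 : ℝ) / γ := by
          rw [Nat.cast_sub hi0]
          have : (0:ℝ) < 1/γ := by positivity
          push_cast
          rw [div_eq_mul_one_div (i0:ℝ) γ]
          nlinarith
  have h2 : ∑ i ∈ Finset.Icc i0 l, (1 / (i * q)) * (1 - (1 - q / γ) ^ i)
      ≤ (1 / q) * ∑ i ∈ Finset.Icc i0 l, (1 / (i : ℝ)) := by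
    rw [Finset.mul_sum]
    apply Finset.sum_le_sum
    intro i hi
    exact hterm2 i (le_trans hi0 (Finset.mem_Icc.mp hi).1)
  linarith
end
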